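/- (Barr–Kock Theorem) Let C be a regular category. Let f : A ⟶ X be a regular epimorphism, and let u : A ⟶ B, g : B ⟶ Y, w : X ⟶ Y be morphisms with w ∘ f = g ∘ u. Let (Eq(f), p₁, p₂) be the kernel pair of f, (Eq(g), q₁, q₂) the kernel pair of g, and v : Eq(f) ⟶ Eq(g) the unique morphism with q₁ ∘ v = u ∘ p₁ and q₂ ∘ v = u ∘ p₂. If the square with sides p₁, v, u, q₁ is a pullback, then the square with sides f, u, w, g is a pullback. -/

import Mathlib

open CategoryTheory Limits

/-- The Barr–Kock theorem: in a regular category, given a regular epimorphism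
`f : A ⟶ X` and morphisms `u : A ⟶ B`, `g : B ⟶ Y`, `w : X ⟶ Y` with
`w ∘ f = g ∘ u`, if the induced square between the first kernel pair
projections of `f` and `g` is a pullback, then the square `(f, u, w, g)`
is a pullback. -/
theorem stmt_12 {C : Type*} [Category C] [HasFiniteLimits C]
    (hcoeq : ∀ {X Y : C} (f : X ⟶ Y),
      HasCoequalizer (pullback.fst f f) (pullback.snd f f))
    (hstab : ∀ ⦃P X Y Z : C⦄ (fst : P ⟶ X) (snd : P ⟶ Y) (f : X ⟶ Z) (g : Y ⟶ Z),
      IsPullback fst snd f g → Nonempty (RegularEpi g) → Nonempty (RegularEpi fst))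
    {A B X Y : C} (f : A ⟶ X) (_ : RegularEpi f) (u : A ⟶ B) (g : B ⟶ Y) (w : X ⟶ Y)
    (hcomm : f ≫ w = u ≫ g)
    (v : pullback f f ⟶ pullback g g)
    (hv1 : v ≫ pullback.fst g g = pullback.fst f f ≫ u)
    (hv2 : v ≫ pullback.snd g g = pullback.snd f f ≫ u)
    (hpb : IsPullback (pullback.fst f f) v u (pullback.fst g g)) :
    IsPullback f u w g := by
  set p₁ := pullback.fst f f
  set p₂ := pullback.snd f f
  -- the comparison map into the pullback of `w` and `g`
  set h : A ⟶ pullback w g := pullback.lift f u hcomm with hh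
  have hfst : h ≫ pullback.fst w g = f := pullback.lift_fst _ _ _
  have hsnd : h ≫ pullback.snd w g = u := pullback.lift_snd _ _ _
  -- `h` is a monomorphism, since `(p₁, v)` are jointly monic
  have hmono : Mono h := by
    constructor
    intro T x y hxy
    have hxf : x ≫ f = y ≫ f := by
      rw [← hfst]; simp only [← Category.assoc, hxy]
    have hxu : x ≫ u = y ≫ u := by
      rw [← hsnd]; simp only [← Category.assoc, hxy]
    let e : T ⟶ pullback f f := pullback.lift x y hxf
    let e' : T ⟶ pullback f f := pullback.lift x x rfl
    have he : e = e' := by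
      apply hpb.hom_ext
      · simp [e, e', p₁, pullback.lift_fst]
      · apply pullback.hom_ext
        · rw [Category.assoc, Category.assoc, hv1]
          simp [e, e', p₁, pullback.lift_fst_assoc]
        · rw [Category.assoc, Category.assoc, hv2]
          simp [e, e', p₂, hxu, pullback.lift_snd_assoc]
    have hx : e ≫ p₂ = y := pullback.lift_snd _ _ _
    have hx' : e' ≫ p₂ = x := pullback.lift_snd _ _ _
    rw [← hx, he, hx']
  -- paste the hypothesis pullback with the kernel-pair square of `g`
  have big : IsPullback p₁ (v ≫ pullback.snd g g) (u ≫ g) g :=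
    hpb.paste_vert (IsPullback.of_hasPullback g g)
  rw [hv2, ← hcomm] at big
  -- extract the top square: `IsPullback p₁ (p₂ ≫ h) f (pullback.fst w g)`
  have hcomp : (p₂ ≫ h) ≫ pullback.snd w g = p₂ ≫ u := by
    rw [Category.assoc, hsnd]
  have top : IsPullback p₁ (p₂ ≫ h) f (pullback.fst w g) := by
    refine IsPullback.of_bot ?_ ?_ (IsPullback.of_hasPullback w g)
    · rw [Category.assoc, hsnd]; exact big
    · rw [Category.assoc, hfst]
      exact pullback.condition
  -- by stability, `p₂ ≫ h` is a regular epi, hence `h` is a strong epi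
  obtain ⟨reg⟩ := hstab (p₂ ≫ h) p₁ (pullback.fst w g) f top.flip ⟨‹RegularEpi f›⟩
  have hstrong : StrongEpi (p₂ ≫ h) := by have := isRegularEpi_of_regularEpi reg; infer_instance
  have : StrongEpi h := @strongEpi_of_strongEpi _ _ _ _ _ p₂ h hstrong
  have : IsIso h := isIso_of_mono_of_strongEpi h
  exact IsPullback.of_iso_pullback ⟨hcomm⟩ (asIso h) hfst hsnd
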